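/- Let f : ℝ → ℝ be five times continuously differentiable and x ∈ ℝ. Define for h ≠ 0 the truncation error E(h) = (1/4)(f'(x−h) + f'(x+h)) + f'(x) − (3/2)·(f(x+h) − f(x−h))/(2h). Then E(h) = O(h⁴) as h → 0. Hence the compact scheme with coefficients α = 1/4, a = 3/2, b = 0 approximates the first derivative to fourth order. -/

import Mathlib

private lemma compact_aux (f : ℝ → ℝ) (hf : ContDiff ℝ 5 f) (x : ℝ) :
    ∃ M > 0, ∀ h : ℝ, |h| ≤ 1 →
      |h/2 * (deriv f (x - h) + deriv f (x + h)) + 2*h*deriv f x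
        - 3/2 * (f (x + h) - f (x - h))| ≤ M * |h|^5 := by
  -- derivatives
  have hd : ∀ k : ℕ, k < 5 → ∀ t : ℝ,
      HasDerivAt (iteratedDeriv k f) (iteratedDeriv (k+1) f t) t := by
    intro k hk t
    have h1 : DifferentiableAt ℝ (iteratedDeriv k f) t :=
      (hf.differentiable_iteratedDeriv k (by exact_mod_cast hk)).differentiableAt
    simpa [iteratedDeriv_succ] using h1.hasDerivAt
  have P : ∀ k : ℕ, k < 5 → ∀ t : ℝ,
      HasDerivAt (fun h : ℝ => iteratedDeriv k f (x + h)) (iteratedDeriv (k+1) f (x + t)) t :=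
    fun k hk t => (hd k hk (x + t)).comp_const_add x t
  have Q : ∀ k : ℕ, k < 5 → ∀ t : ℝ,
      HasDerivAt (fun h : ℝ => iteratedDeriv k f (x - h)) (-(iteratedDeriv (k+1) f (x - t))) t :=
    fun k hk t => (hd k hk (x - t)).comp_const_sub x t
  -- the function chain
  set D : ℕ → ℝ → ℝ := fun k => iteratedDeriv k f with hD
  set F : ℝ → ℝ := fun h => h/2 * (D 1 (x - h) + D 1 (x + h)) + 2*h*D 1 x
      - 3/2 * (D 0 (x + h) - D 0 (x - h)) with hF
  set F1 : ℝ → ℝ := fun h => -(D 1 (x - h) + D 1 (x + h)) + 2*D 1 x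
      + h/2 * (D 2 (x + h) - D 2 (x - h)) with hF1
  set F2 : ℝ → ℝ := fun h => -(1/2) * (D 2 (x + h) - D 2 (x - h))
      + h/2 * (D 3 (x + h) + D 3 (x - h)) with hF2
  set F3 : ℝ → ℝ := fun h => h/2 * (D 4 (x + h) - D 4 (x - h)) with hF3
  have hdF : ∀ t : ℝ, HasDerivAt F (F1 t) t := by
    intro t
    have h1 := ((hasDerivAt_id t).div_const 2).mul ((Q 1 (by norm_num) t).add (P 1 (by norm_num) t))
    have h2 := ((hasDerivAt_id t).const_mul (2:ℝ)).mul_const (D 1 x)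
    have h3 := ((P 0 (by norm_num) t).sub (Q 0 (by norm_num) t)).const_mul (3/2 : ℝ)
    have h4 := (h1.add h2).sub h3
    refine h4.congr_deriv ?_
    simp only [id_eq, Pi.add_apply, Pi.sub_apply]; ring
  have hdF1 : ∀ t : ℝ, HasDerivAt F1 (F2 t) t := by
    intro t
    have h1 := ((Q 1 (by norm_num) t).add (P 1 (by norm_num) t)).neg
    have h2 := ((hasDerivAt_id t).div_const 2).mul ((P 2 (by norm_num) t).sub (Q 2 (by norm_num) t))
    have h4 := (h1.add_const (2*D 1 x)).add h2
    refine h4.congr_deriv ?_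
    simp only [id_eq, Pi.add_apply, Pi.sub_apply]; ring
  have hdF2 : ∀ t : ℝ, HasDerivAt F2 (F3 t) t := by
    intro t
    have h1 := ((P 2 (by norm_num) t).sub (Q 2 (by norm_num) t)).const_mul (-(1/2) : ℝ)
    have h2 := ((hasDerivAt_id t).div_const 2).mul ((P 3 (by norm_num) t).add (Q 3 (by norm_num) t))
    have h4 := h1.add h2
    refine h4.congr_deriv ?_
    simp only [id_eq, Pi.add_apply, Pi.sub_apply]; ring
  -- bound on the 5th derivative
  obtain ⟨M0, hM0⟩ := (isCompact_Icc (a := x - 1) (b := x + 1)).exists_bound_of_continuousOn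
    ((hf.continuous_iteratedDeriv 5 le_rfl).continuousOn)
  set M : ℝ := |M0| + 1 with hM
  have hMpos : 0 < M := by rw [hM]; positivity
  have hM5 : ∀ y ∈ Set.Icc (x-1) (x+1), ‖iteratedDeriv 5 f y‖ ≤ M := fun y hy =>
    (hM0 y hy).trans (by rw [hM]; nlinarith [le_abs_self M0])
  -- |D4(x+h) - D4(x-h)| ≤ M * 2|h|
  have B3 : ∀ h : ℝ, |h| ≤ 1 → |F3 h| ≤ M * |h|^2 := by
    intro h hh
    have hmem1 : x + h ∈ Set.Icc (x-1) (x+1) := by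
      constructor <;> cases abs_le.1 hh <;> linarith [abs_le.1 hh]
    have hmem2 : x - h ∈ Set.Icc (x-1) (x+1) := by
      rcases abs_le.1 hh with ⟨a, b⟩; constructor <;> linarith
    have hmvt := Convex.norm_image_sub_le_of_norm_hasDerivWithin_le
      (f := D 4) (f' := D 5) (C := M) (s := Set.Icc (x-1) (x+1))
      (fun y hy => (hd 4 (by norm_num) y).hasDerivWithinAt)
      (fun y hy => hM5 y hy) (convex_Icc _ _) hmem2 hmem1
    have : |D 4 (x + h) - D 4 (x - h)| ≤ M * (2 * |h|) := by
      have e : (x + h) - (x - h) = 2 * h := by ring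
      simpa [Real.norm_eq_abs, e, abs_mul] using hmvt
    have habs : |F3 h| ≤ |h|/2 * (M * (2*|h|)) := by
      have e : F3 h = h/2 * (D 4 (x + h) - D 4 (x - h)) := by rw [hF3]
      rw [e, abs_mul, abs_div, abs_two]
      exact mul_le_mul_of_nonneg_left this (by positivity)
    calc |F3 h| ≤ |h|/2 * (M * (2*|h|)) := habs
      _ = M * |h|^2 := by ring
  -- integration step
  have key : ∀ (G G' : ℝ → ℝ) (n : ℕ), (∀ t, HasDerivAt G (G' t) t) → G 0 = 0 →
      (∀ t : ℝ, |t| ≤ 1 → |G' t| ≤ M * |t|^n) →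
      ∀ h : ℝ, |h| ≤ 1 → |G h| ≤ M * |h|^(n+1) := by
    intro G G' n hG hG0 hG' h hh
    have hmvt := Convex.norm_image_sub_le_of_norm_hasDerivWithin_le
      (f := G) (f' := G') (C := M * |h|^n) (s := Set.uIcc (0:ℝ) h)
      (fun t ht => (hG t).hasDerivWithinAt)
      (fun t ht => ?_) (convex_uIcc _ _) Set.left_mem_uIcc Set.right_mem_uIcc
    · calc |G h| = |G h - G 0| := by rw [hG0, sub_zero]
        _ ≤ M * |h|^n * |h - 0| := by simpa [Real.norm_eq_abs] using hmvt
        _ = M * |h|^(n+1) := by rw [sub_zero]; ring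
    · have habs : |t| ≤ |h| := by
        rw [Set.mem_uIcc] at ht
        rcases abs_cases t with ⟨et, _⟩ | ⟨et, _⟩ <;> rcases abs_cases h with ⟨eh, _⟩ | ⟨eh, _⟩ <;>
          rcases ht with ⟨h1, h2⟩ | ⟨h1, h2⟩ <;> linarith
      calc ‖G' t‖ ≤ M * |t|^n := hG' t (habs.trans hh)
        _ ≤ M * |h|^n := by gcongr
  have hF20 : F2 0 = 0 := by simp [hF2]
  have hF10 : F1 0 = 0 := by simp [hF1]; try ring
  have hF0 : F 0 = 0 := by simp [hF]
  have B2 := key F2 F3 2 hdF2 hF20 B3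
  have B1 := key F1 F2 3 hdF1 hF10 B2
  have B0 := key F F1 4 hdF hF0 B1
  refine ⟨M, hMpos, fun h hh => ?_⟩
  have := B0 h hh
  have e1 : D 1 = deriv f := by rw [hD]; exact iteratedDeriv_one
  have e0 : D 0 = f := by rw [hD]; exact iteratedDeriv_zero
  rw [← e1, ← e0]
  simpa [hF] using this

theorem compact_first_derivative_fourth_order
    (f : ℝ → ℝ) (hf : ContDiff ℝ 5 f) (x : ℝ)
    (E : ℝ → ℝ)
    (hE : ∀ h : ℝ, h ≠ 0 → E h =
      (1 / 4) * (deriv f (x - h) + deriv f (x + h)) + deriv f x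
        - (3 / 2) * (f (x + h) - f (x - h)) / (2 * h)) :
    ∃ C > 0, ∃ h₀ > 0, ∀ h : ℝ, h ≠ 0 → |h| ≤ h₀ → |E h| ≤ C * h ^ 4 := by
  obtain ⟨M, hMpos, hM⟩ := compact_aux f hf x
  refine ⟨M/2, by positivity, 1, one_pos, fun h hne hh => ?_⟩
  have hEh : E h = (h/2 * (deriv f (x - h) + deriv f (x + h)) + 2*h*deriv f x
      - 3/2 * (f (x + h) - f (x - h))) / (2*h) := by
    rw [hE h hne]; field_simp; ring
  have hb := hM h hh
  rw [hEh, abs_div]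
  rw [div_le_iff₀ (by positivity : (0:ℝ) < |2*h|)]
  have e4 : |h|^4 = h^4 := by rw [pow_abs, abs_of_nonneg (by positivity)]
  calc |h/2 * (deriv f (x - h) + deriv f (x + h)) + 2*h*deriv f x
      - 3/2 * (f (x + h) - f (x - h))| ≤ M * |h|^5 := hb
    _ = M/2 * h^4 * |2*h| := by rw [abs_mul, abs_two, ← e4]; ring
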